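/- For each i = 1, …, d let Δ_i and Δ_{i,n} (n ∈ ℕ) be nonempty compact convex subsets of E with d_H(Δ_{i,n}, Δ_i) → 0 as n → ∞. Then the mixed volumes converge: MV(Δ_{1,n}, …, Δ_{d,n}) → MV(Δ_1, …, Δ_d) as n → ∞. -/

import Mathlib

open Set MeasureTheory Pointwise Metric Filter Topology

noncomputable section

/-- The mixed volume of `d` compact convex subsets of `ℝ^d`, defined by
inclusion–exclusion over Minkowski sums (the empty Minkowski sum is `{0}`). -/
noncomputable def mixedVol (d : ℕ) (Δ : Fin d → Set (EuclideanSpace ℝ (Fin d))) : ℝ :=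
  ∑ I ∈ (Finset.univ : Finset (Fin d)).powerset,
    (-1 : ℝ) ^ (d - I.card) * (volume (∑ i ∈ I, Δ i)).toReal

section Aux

variable {V : Type*} [NormedAddCommGroup V]

/-- A Minkowski sum of compact sets is compact. -/
lemma sum_isCompact {ι : Type*} (I : Finset ι) (f : ι → Set V)
    (h : ∀ i ∈ I, IsCompact (f i)) : IsCompact (∑ i ∈ I, f i) := by
  classical
  induction I using Finset.induction_on with
  | empty => rw [Finset.sum_empty, ← Set.singleton_zero]; exact isCompact_singleton
  | insert _ _ ha ih =>
    rw [Finset.sum_insert ha]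
    exact (h _ (Finset.mem_insert_self _ _)).add
      (ih fun i hi => h i (Finset.mem_insert_of_mem hi))

/-- A Minkowski sum of nonempty sets is nonempty. -/
lemma sum_nonempty {ι : Type*} (I : Finset ι) (f : ι → Set V)
    (h : ∀ i ∈ I, (f i).Nonempty) : (∑ i ∈ I, f i).Nonempty := by
  classical
  induction I using Finset.induction_on with
  | empty => rw [Finset.sum_empty, ← Set.singleton_zero]; exact Set.singleton_nonempty 0
  | insert _ _ ha ih =>
    rw [Finset.sum_insert ha]
    exact (h _ (Finset.mem_insert_self _ _)).add
      (ih fun i hi => h i (Finset.mem_insert_of_mem hi))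

/-- A Minkowski sum of convex sets is convex. -/
lemma sum_convex {ι : Type*} [NormedSpace ℝ V] (I : Finset ι) (f : ι → Set V)
    (h : ∀ i ∈ I, Convex ℝ (f i)) : Convex ℝ (∑ i ∈ I, f i) := by
  classical
  induction I using Finset.induction_on with
  | empty => rw [Finset.sum_empty, ← Set.singleton_zero]; exact convex_singleton 0
  | insert _ _ ha ih =>
    rw [Finset.sum_insert ha]
    exact (h _ (Finset.mem_insert_self _ _)).add
      (ih fun i hi => h i (Finset.mem_insert_of_mem hi))

/-- Hausdorff distance of Minkowski sums is at most the sum of the Hausdorff distances. -/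
lemma hausdorffDist_add_add_le {A B C D : Set V}
    (hA : IsCompact A) (hAne : A.Nonempty) (hB : IsCompact B) (hBne : B.Nonempty)
    (hC : IsCompact C) (hCne : C.Nonempty) (hD : IsCompact D) (hDne : D.Nonempty) :
    hausdorffDist (A + B) (C + D) ≤ hausdorffDist A C + hausdorffDist B D := by
  have key : ∀ A B C D : Set V, IsCompact C → C.Nonempty → IsCompact D → D.Nonempty →
      EMetric.hausdorffEdist A C ≠ ⊤ → EMetric.hausdorffEdist B D ≠ ⊤ →
      ∀ x ∈ A + B, ∃ y ∈ C + D, dist x y ≤ hausdorffDist A C + hausdorffDist B D := by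
    intro A B C D hC hCne hD hDne hAC hBD x hx
    rw [Set.mem_add] at hx
    obtain ⟨a, ha, b, hb, rfl⟩ := hx
    obtain ⟨c, hc, hac⟩ := hC.exists_infDist_eq_dist hCne a
    obtain ⟨e, he, hbe⟩ := hD.exists_infDist_eq_dist hDne b
    refine ⟨c + e, Set.add_mem_add hc he, ?_⟩
    calc dist (a + b) (c + e) ≤ dist a c + dist b e := dist_add_add_le _ _ _ _
      _ ≤ hausdorffDist A C + hausdorffDist B D := add_le_add
          (by rw [← hac]; exact infDist_le_hausdorffDist_of_mem ha hAC)
          (by rw [← hbe]; exact infDist_le_hausdorffDist_of_mem hb hBD)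
  have hAC : EMetric.hausdorffEdist A C ≠ ⊤ :=
    hausdorffEdist_ne_top_of_nonempty_of_bounded hAne hCne hA.isBounded hC.isBounded
  have hBD : EMetric.hausdorffEdist B D ≠ ⊤ :=
    hausdorffEdist_ne_top_of_nonempty_of_bounded hBne hDne hB.isBounded hD.isBounded
  apply hausdorffDist_le_of_mem_dist
    (add_nonneg hausdorffDist_nonneg hausdorffDist_nonneg)
  · exact key A B C D hC hCne hD hDne hAC hBD
  · intro x hx
    obtain ⟨y, hy, hxy⟩ := key C D A B hA hAne hB hBne
      (by rw [EMetric.hausdorffEdist, Metric.hausdorffEDist_comm]; exact hAC) (by rw [EMetric.hausdorffEdist, Metric.hausdorffEDist_comm]; exact hBD) x hx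
    rw [hausdorffDist_comm (s := C), hausdorffDist_comm (s := D)] at hxy
    exact ⟨y, hy, hxy⟩

/-- The inner parallel body: points whose `ε`-ball is contained in `K`. -/
def inb (K : Set V) (ε : ℝ) : Set V := {x | Metric.closedBall x ε ⊆ K}

lemma inb_subset {K : Set V} {ε : ℝ} (hε : 0 ≤ ε) : inb K ε ⊆ K :=
  fun _ hx => hx (Metric.mem_closedBall_self hε)

lemma inb_anti {K : Set V} {ε ε' : ℝ} (h : ε ≤ ε') : inb K ε' ⊆ inb K ε :=
  fun _ hx => (Metric.closedBall_subset_closedBall h).trans hx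

lemma inb_isClosed {K : Set V} (hK : IsClosed K) (ε : ℝ) : IsClosed (inb K ε) := by
  have : inb K ε = ⋂ v ∈ Metric.closedBall (0 : V) ε, (fun x => x + v) ⁻¹' K := by
    ext x
    simp only [inb, Set.mem_setOf_eq, Set.mem_iInter, Set.mem_preimage,
      Metric.mem_closedBall, dist_zero_right]
    constructor
    · intro h v hv
      apply h
      rw [Metric.mem_closedBall, dist_eq_norm]
      simpa using hv
    · intro h y hy
      rw [show y = x + (y - x) by abel]
      apply h
      rw [Metric.mem_closedBall, dist_eq_norm] at hy
      simpa using hy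
  rw [this]
  exact isClosed_biInter fun v _ => hK.preimage (continuous_id.add continuous_const)

lemma interior_subset_iUnion_inb {K : Set V} :
    interior K ⊆ ⋃ m : ℕ, inb K (1 / (m + 1)) := by
  intro x hx
  obtain ⟨r, hr, hball⟩ := Metric.isOpen_iff.1 isOpen_interior x hx
  obtain ⟨m, hm⟩ := exists_nat_one_div_lt hr
  refine Set.mem_iUnion.2 ⟨m, ?_⟩
  intro y hy
  exact interior_subset (hball ((Metric.closedBall_subset_ball hm) hy))

end Aux

section Sep

variable {V : Type*} [NormedAddCommGroup V] [InnerProductSpace ℝ V]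

/-- Separation: if the closed `ε`-ball around `x` lies in `K`, and every point of `K` is within
`ε' < ε` of the compact convex set `L`, then `x ∈ L`. -/
lemma mem_of_closedBall_subset {L K : Set V}
    (hLcp : IsCompact L) (hLcv : Convex ℝ L) (hLne : L.Nonempty)
    {x : V} {ε ε' : ℝ} (hε' : 0 ≤ ε') (hεε' : ε' < ε)
    (hball : Metric.closedBall x ε ⊆ K)
    (hK : ∀ y ∈ K, infDist y L ≤ ε') : x ∈ L := by
  by_contra hx
  have hε : 0 < ε := hε'.trans_lt hεε'
  obtain ⟨p, hpL, hp⟩ := hLcp.exists_infDist_eq_dist hLne x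
  have hvne : x - p ≠ 0 := sub_ne_zero.2 fun h => hx (h ▸ hpL)
  have hvpos : 0 < ‖x - p‖ := norm_pos_iff.2 hvne
  have hiInf : ‖x - p‖ = ⨅ w : L, ‖x - w‖ := by
    rw [← dist_eq_norm, ← hp, Metric.infDist_eq_iInf]
    simp_rw [dist_eq_norm]
  have hchar : ∀ w ∈ L, inner ℝ (x - p) (w - p) ≤ (0 : ℝ) :=
    (norm_eq_iInf_iff_real_inner_le_zero hLcv hpL).1 hiInf
  set u : V := ‖x - p‖⁻¹ • (x - p) with hu
  have hnu : ‖u‖ = 1 := norm_smul_inv_norm hvne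
  set q : V := x + ε • u with hq
  have hqK : q ∈ K := by
    apply hball
    rw [Metric.mem_closedBall, dist_eq_norm]
    simp [hq, norm_smul, hnu, abs_of_nonneg hε.le]
  obtain ⟨y, hyL, hqy⟩ := hLcp.exists_infDist_eq_dist hLne q
  have hqL : dist q y ≤ ε' := hqy ▸ hK q hqK
  have h1 : inner ℝ (q - y) u ≤ (‖q - y‖ : ℝ) := by
    calc (inner ℝ (q - y) u : ℝ) ≤ ‖q - y‖ * ‖u‖ := real_inner_le_norm _ _
      _ = ‖q - y‖ := by rw [hnu, mul_one]
  have e1 : (inner ℝ (x - p) u : ℝ) = ‖x - p‖ := by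
    rw [hu, real_inner_smul_right, real_inner_self_eq_norm_mul_norm]
    field_simp
  have e2 : (inner ℝ u u : ℝ) = 1 := by
    rw [real_inner_self_eq_norm_mul_norm, hnu]; ring
  have e3 : (0 : ℝ) ≤ inner ℝ (p - y) u := by
    have h := hchar y hyL
    have hrw : (inner ℝ (x - p) (p - y) : ℝ) = -inner ℝ (x - p) (y - p) := by
      rw [show p - y = -(y - p) by abel, inner_neg_right]
    have h0 : (0 : ℝ) ≤ inner ℝ (x - p) (p - y) := by rw [hrw]; linarith
    rw [hu, real_inner_smul_right]
    exact mul_nonneg (inv_nonneg.2 (norm_nonneg _)) (by rwa [real_inner_comm] at h0)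
  have h2 : ‖x - p‖ + ε ≤ (inner ℝ (q - y) u : ℝ) := by
    have hqys : q - y = (x - p) + ε • u + (p - y) := by rw [hq]; abel
    rw [hqys, inner_add_left, inner_add_left, real_inner_smul_left, e1, e2]
    linarith
  have hkey : ε ≤ dist q y := by
    rw [dist_eq_norm]
    linarith [norm_nonneg (x - p)]
  linarith

end Sep

section Vol

variable {d : ℕ}

lemma tendsto_volume_inb {K : Set (EuclideanSpace ℝ (Fin d))}
    (hKcp : IsCompact K) (hKcv : Convex ℝ K) :
    Tendsto (fun m : ℕ => volume (inb K (1 / (m + 1)))) atTop (𝓝 (volume K)) := by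
  have hmono : Monotone fun m : ℕ => inb K (1 / (m + 1 : ℝ)) := by
    intro m m' h
    apply inb_anti
    apply one_div_le_one_div_of_le (by positivity)
    have : (m : ℝ) ≤ m' := Nat.cast_le.2 h
    linarith
  have hU : volume (⋃ m : ℕ, inb K (1 / (m + 1 : ℝ))) = volume K := by
    apply le_antisymm
    · exact measure_mono (Set.iUnion_subset fun m => inb_subset (by positivity))
    · have h1 : volume K ≤ volume (interior K) := by
        calc volume K ≤ volume (interior K ∪ frontier K) := by
              apply measure_mono
              have : K ⊆ closure K := subset_closure
              rwa [closure_eq_interior_union_frontier K] at this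
          _ ≤ volume (interior K) + volume (frontier K) := measure_union_le _ _
          _ = volume (interior K) := by rw [hKcv.addHaar_frontier volume, add_zero]
      exact h1.trans (measure_mono interior_subset_iUnion_inb)
  have := tendsto_measure_iUnion_atTop (μ := volume) hmono
  rwa [hU] at this

lemma tendsto_volume_of_tendsto_hausdorffDist
    {K : Set (EuclideanSpace ℝ (Fin d))} (hKcp : IsCompact K) (hKcv : Convex ℝ K)
    (hKne : K.Nonempty) {L : ℕ → Set (EuclideanSpace ℝ (Fin d))}
    (hLcp : ∀ n, IsCompact (L n)) (hLcv : ∀ n, Convex ℝ (L n)) (hLne : ∀ n, (L n).Nonempty)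
    (h : Tendsto (fun n => hausdorffDist (L n) K) atTop (𝓝 0)) :
    Tendsto (fun n => (volume (L n)).toReal) atTop (𝓝 (volume K).toReal) := by
  have hKfin : volume K ≠ ⊤ := hKcp.measure_lt_top.ne
  rw [Metric.tendsto_atTop]
  intro δ hδ
  -- upper approximation by closed thickenings
  have h1 : Tendsto (fun r : ℝ => (volume (cthickening r K)).toReal) (𝓝 0)
      (𝓝 (volume K).toReal) :=
    (ENNReal.tendsto_toReal hKfin).comp (tendsto_measure_cthickening_of_isCompact hKcp)
  have h1' := h1.eventually_lt_const (show (volume K).toReal < (volume K).toReal + δ by linarith)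
  obtain ⟨ε1, hε1, hε1p⟩ := Metric.eventually_nhds_iff.1 h1'
  -- lower approximation by inner bodies
  have h2 : Tendsto (fun m : ℕ => (volume (inb K (1 / (m + 1)))).toReal) atTop
      (𝓝 (volume K).toReal) :=
    (ENNReal.tendsto_toReal hKfin).comp (tendsto_volume_inb hKcp hKcv)
  have h2' := h2.eventually_const_lt
    (show (volume K).toReal - δ < (volume K).toReal by linarith)
  obtain ⟨m0, hm0⟩ := h2'.exists
  set εin : ℝ := 1 / (m0 + 1) with hεin
  have hεinpos : 0 < εin := by positivity
  set ε : ℝ := min (ε1 / 2) εin with hε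
  have hεpos : 0 < ε := lt_min (by linarith) hεinpos
  obtain ⟨N, hN⟩ := (Metric.tendsto_atTop.1 h) (ε / 2) (by positivity)
  refine ⟨N, fun n hn => ?_⟩
  have hdn : hausdorffDist (L n) K < ε / 2 := by
    have := hN n hn
    rw [Real.dist_eq, sub_zero, abs_of_nonneg hausdorffDist_nonneg] at this
    exact this
  have hEdist : EMetric.hausdorffEdist (L n) K ≠ ⊤ :=
    hausdorffEdist_ne_top_of_nonempty_of_bounded (hLne n) hKne
      (hLcp n).isBounded hKcp.isBounded
  -- upper bound
  have hupper : (volume (L n)).toReal < (volume K).toReal + δ := by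
    have hsub : L n ⊆ cthickening ε K := by
      intro x hx
      obtain ⟨y, hy, hxy⟩ := hKcp.exists_infDist_eq_dist hKne x
      apply mem_cthickening_of_dist_le x y ε K hy
      rw [← hxy]
      calc infDist x K ≤ hausdorffDist (L n) K := infDist_le_hausdorffDist_of_mem hx hEdist
        _ ≤ ε := by linarith
    have hfin : volume (cthickening ε K) ≠ ⊤ :=
      hKcp.isBounded.cthickening.measure_lt_top.ne
    have : (volume (L n)).toReal ≤ (volume (cthickening ε K)).toReal :=
      ENNReal.toReal_mono hfin (measure_mono hsub)
    have hεlt : dist ε 0 < ε1 := by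
      rw [Real.dist_eq, sub_zero, abs_of_pos hεpos]
      calc ε ≤ ε1 / 2 := min_le_left _ _
        _ < ε1 := by linarith
    exact lt_of_le_of_lt this (hε1p hεlt)
  -- lower bound
  have hlower : (volume K).toReal - δ < (volume (L n)).toReal := by
    have hsub : inb K ε ⊆ L n := by
      intro x hx
      apply mem_of_closedBall_subset (hLcp n) (hLcv n) (hLne n)
        (ε' := ε / 2) (by positivity) (by linarith) hx
      intro y hy
      have : infDist y (L n) ≤ hausdorffDist K (L n) :=
        infDist_le_hausdorffDist_of_mem hy (by rw [Metric.hausdorffEDist_comm]; exact hEdist)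
      rw [hausdorffDist_comm] at this
      linarith
    have hsub2 : inb K εin ⊆ inb K ε := inb_anti (min_le_right _ _)
    have hfin : volume (L n) ≠ ⊤ := (hLcp n).measure_lt_top.ne
    have : (volume (inb K εin)).toReal ≤ (volume (L n)).toReal :=
      ENNReal.toReal_mono hfin (measure_mono (hsub2.trans hsub))
    exact lt_of_lt_of_le hm0 this
  rw [Real.dist_eq, abs_sub_lt_iff]
  constructor <;> linarith

end Vol

/-- Mixed volumes are continuous with respect to Hausdorff convergence of the bodies. -/
theorem stmt_6 (d : ℕ) (hd : 1 ≤ d)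
    (Δ : Fin d → Set (EuclideanSpace ℝ (Fin d)))
    (Δn : ℕ → Fin d → Set (EuclideanSpace ℝ (Fin d)))
    (hΔ : ∀ i, (Δ i).Nonempty ∧ IsCompact (Δ i) ∧ Convex ℝ (Δ i))
    (hΔn : ∀ n i, (Δn n i).Nonempty ∧ IsCompact (Δn n i) ∧ Convex ℝ (Δn n i))
    (hconv : ∀ i, Filter.Tendsto (fun n => Metric.hausdorffDist (Δn n i) (Δ i))
      Filter.atTop (nhds 0)) :
    Filter.Tendsto (fun n => mixedVol d (Δn n)) Filter.atTop (nhds (mixedVol d Δ)) := by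
  classical
  unfold mixedVol
  apply tendsto_finset_sum
  intro I _
  apply Filter.Tendsto.const_mul
  -- Hausdorff convergence of the Minkowski sums
  have hsum : ∀ J : Finset (Fin d),
      Tendsto (fun n => hausdorffDist (∑ i ∈ J, Δn n i) (∑ i ∈ J, Δ i)) atTop (𝓝 0) := by
    intro J
    induction J using Finset.induction_on with
    | empty => simpa [Finset.sum_empty] using
        (tendsto_const_nhds : Tendsto (fun _ : ℕ => hausdorffDist (0 : Set (EuclideanSpace ℝ (Fin d))) 0) atTop _)
    | @insert a J ha ih =>
      apply squeeze_zero (fun n => hausdorffDist_nonneg)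
        (g := fun n => hausdorffDist (Δn n a) (Δ a) +
          hausdorffDist (∑ i ∈ J, Δn n i) (∑ i ∈ J, Δ i))
      · intro n
        rw [Finset.sum_insert ha, Finset.sum_insert ha]
        exact hausdorffDist_add_add_le
          (hΔn n a).2.1 (hΔn n a).1
          (sum_isCompact J _ fun i _ => (hΔn n i).2.1) (sum_nonempty J _ fun i _ => (hΔn n i).1)
          (hΔ a).2.1 (hΔ a).1
          (sum_isCompact J _ fun i _ => (hΔ i).2.1) (sum_nonempty J _ fun i _ => (hΔ i).1)
      · simpa using (hconv a).add ih
  exact tendsto_volume_of_tendsto_hausdorffDist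
    (sum_isCompact I _ fun i _ => (hΔ i).2.1)
    (sum_convex I _ fun i _ => (hΔ i).2.2)
    (sum_nonempty I _ fun i _ => (hΔ i).1)
    (fun n => sum_isCompact I _ fun i _ => (hΔn n i).2.1)
    (fun n => sum_convex I _ fun i _ => (hΔn n i).2.2)
    (fun n => sum_nonempty I _ fun i _ => (hΔn n i).1)
    (hsum I)
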